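/- Let (Ω, ℱ, ℙ) be a probability space and T > 0. Let θ : Ω → ℝ be a random variable with ℙ(θ = 1) = ℙ(θ = −1) = 1/2 and let τ : Ω → ℝ be uniformly distributed on [0,T], with θ and τ independent. Define the process v : [0,T] × Ω → ℝ by v(t) = θ·1_{τ ≤ t}. Then v is a martingale on [0,T] with respect to its natural filtration 𝒱_t := σ{v(s) : s ∈ [0,t]}: each v(t) is integrable and 𝒱_t-measurable, and for all 0 ≤ t ≤ s ≤ T, E[v(s) | 𝒱_t] = v(t) almost surely. -/

import Mathlib

open MeasureTheory ProbabilityTheory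

/-- the step process `v(t) = θ·1_{τ ≤ t}`, with `θ = ±1` with probability
1/2 each, `τ` uniform on `[0,T]`, and `θ, τ` independent, is a martingale with respect to
its natural filtration `𝒱_t = σ{v(s) : s ∈ [0,t]}`: each `v(t)` is integrable and
`𝒱_t`-measurable, and `E[v(s) | 𝒱_t] = v(t)` a.s. for `0 ≤ t ≤ s ≤ T`. -/
theorem stmt_13 {Ω : Type*} [MeasurableSpace Ω] (μ : Measure Ω) [IsProbabilityMeasure μ]
    (T : ℝ) (hT : 0 < T)
    (θ : Ω → ℝ) (hθmeas : Measurable θ)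
    (τ : Ω → ℝ) (hτmeas : Measurable τ)
    (hθ1 : μ {ω | θ ω = 1} = 1/2) (hθ2 : μ {ω | θ ω = -1} = 1/2)
    (hτunif : μ.map τ = (ENNReal.ofReal T)⁻¹ • volume.restrict (Set.Icc 0 T))
    (hindep : IndepFun θ τ μ)
    (v : ℝ → Ω → ℝ) (hv : ∀ t ω, v t ω = if τ ω ≤ t then θ ω else 0)
    (V : ℝ → MeasurableSpace Ω)
    (hV : ∀ t, V t = ⨆ s ∈ Set.Icc (0:ℝ) t, MeasurableSpace.comap (v s) inferInstance) :
    (∀ t ∈ Set.Icc (0:ℝ) T, Integrable (v t) μ ∧ Measurable[V t] (v t)) ∧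
      ∀ t s, t ∈ Set.Icc (0:ℝ) T → s ∈ Set.Icc (0:ℝ) T → t ≤ s →
        μ[v s | V t] =ᵐ[μ] v t := by
  -- θ is a.s. ±1
  have hA : MeasurableSet {ω | θ ω = 1} := hθmeas (measurableSet_singleton 1)
  have hB : MeasurableSet {ω | θ ω = -1} := hθmeas (measurableSet_singleton (-1))
  have hdisj : Disjoint {ω | θ ω = 1} {ω | θ ω = -1} := by
    rw [Set.disjoint_left]
    intro ω h1 h2
    simp only [Set.mem_setOf_eq] at h1 h2
    rw [h1] at h2; norm_num at h2
  have hunion : μ ({ω | θ ω = 1} ∪ {ω | θ ω = -1}) = 1 := by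
    rw [measure_union hdisj hB, hθ1, hθ2]
    exact ENNReal.add_halves 1
  have hθae : ∀ᵐ ω ∂μ, θ ω = 1 ∨ θ ω = -1 := by
    have : μ ({ω | θ ω = 1} ∪ {ω | θ ω = -1})ᶜ = 0 := by
      rw [measure_compl (hA.union hB) (measure_ne_top μ _), hunion, measure_univ]
      simp
    filter_upwards [measure_eq_zero_iff_ae_notMem.mp this] with ω hω
    simpa [Set.mem_union, Set.mem_setOf_eq] using Set.notMem_compl_iff.mp hω
  have hθbd : ∀ᵐ ω ∂μ, ‖θ ω‖ ≤ 1 := by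
    filter_upwards [hθae] with ω hω
    rcases hω with h | h <;> simp [h]
  -- measurability and integrability of v t
  have hvmeas : ∀ t, Measurable (v t) := by
    intro t
    have : v t = fun ω => if τ ω ≤ t then θ ω else 0 := by funext ω; exact hv t ω
    rw [this]
    exact Measurable.ite (hτmeas measurableSet_Iic) hθmeas measurable_const
  have hvint : ∀ t, Integrable (v t) μ := by
    intro t
    refine Integrable.mono' (integrable_const (1:ℝ)) (hvmeas t).aestronglyMeasurable ?_
    filter_upwards [hθbd] with ω hω
    rw [hv t ω]
    split_ifs with h
    · exact hω
    · simp
  have hθint : Integrable θ μ :=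
    Integrable.mono' (integrable_const (1:ℝ)) hθmeas.aestronglyMeasurable hθbd
  -- E θ = 0
  have hθint0 : ∫ ω, θ ω ∂μ = 0 := by
    have heq : θ =ᵐ[μ] fun ω =>
        Set.indicator {ω | θ ω = 1} (fun _ => (1:ℝ)) ω
          + Set.indicator {ω | θ ω = -1} (fun _ => (-1:ℝ)) ω := by
      filter_upwards [hθae] with ω hω
      rcases hω with h | h
      · have h2 : ¬ θ ω = -1 := by rw [h]; norm_num
        simp [Set.indicator_apply, Set.mem_setOf_eq, h, h2]
        norm_num
      · have h1 : ¬ θ ω = 1 := by rw [h]; norm_num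
        simp [Set.indicator_apply, Set.mem_setOf_eq, h, h1]
        norm_num
    rw [integral_congr_ae heq, integral_add
      ((integrable_const (1:ℝ)).indicator hA) ((integrable_const (-1:ℝ)).indicator hB),
      integral_indicator_const _ hA, integral_indicator_const _ hB, measureReal_def, measureReal_def, hθ1, hθ2]
    norm_num
  -- V t is a sub-σ-algebra
  have hVle : ∀ t, V t ≤ ‹MeasurableSpace Ω› := by
    intro t
    rw [hV t]
    refine iSup₂_le fun u _ => ?_
    exact MeasurableSpace.comap_le_iff_le_map.mpr fun s hs => (hvmeas u) hs
  -- v t is V t-measurable for 0 ≤ t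
  have hvVmeas : ∀ t, 0 ≤ t → Measurable[V t] (v t) := by
    intro t ht
    rw [measurable_iff_comap_le, hV t]
    exact le_iSup₂ (f := fun s _ => MeasurableSpace.comap (v s) inferInstance) t
      ⟨ht, le_refl t⟩
  refine ⟨fun t ht => ⟨hvint t, hvVmeas t ht.1⟩, ?_⟩
  intro t s ht hs hts
  -- The difference v s - v t = θ · 1_{Ioc t s}(τ)
  set g : Ω → ℝ := fun ω => θ ω * Set.indicator (Set.Ioc t s) (fun _ => (1:ℝ)) (τ ω) with hg
  have hgdiff : ∀ ω, v s ω - v t ω = g ω := by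
    intro ω
    rw [hv s ω, hv t ω, hg]
    simp only [Set.indicator_apply, Set.mem_Ioc]
    by_cases h1 : τ ω ≤ t
    · have h2 : τ ω ≤ s := h1.trans hts
      have : ¬ t < τ ω := not_lt.mpr h1
      simp [h1, h2, this]
    · by_cases h2 : τ ω ≤ s
      · simp [h1, h2, lt_of_not_ge h1]
      · simp [h1, h2]
  -- ∫ g = 0 by independence
  have hindg : IndepFun θ (fun ω => Set.indicator (Set.Ioc t s) (fun _ => (1:ℝ)) (τ ω)) μ :=
    hindep.comp measurable_id
      ((measurable_const (a := (1:ℝ))).indicator measurableSet_Ioc)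
  have hgint0 : ∫ ω, g ω ∂μ = 0 := by
    have := hindg.integral_mul_eq_mul_integral hθmeas.aestronglyMeasurable
      (((measurable_const (a := (1:ℝ))).indicator measurableSet_Ioc).comp
        hτmeas).aestronglyMeasurable
    simp only [Pi.mul_apply] at this
    rw [hg]
    calc ∫ ω, θ ω * Set.indicator (Set.Ioc t s) (fun _ => (1:ℝ)) (τ ω) ∂μ
        = (∫ ω, θ ω ∂μ) * _ := this
      _ = 0 := by rw [hθint0, zero_mul]
  -- V t ≤ comap W where W collapses {τ > t}
  set W : Ω → ℝ × ℝ := fun ω => if τ ω ≤ t then (θ ω, τ ω) else (0, t + 1) with hW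
  have hVW : V t ≤ MeasurableSpace.comap W inferInstance := by
    rw [hV t]
    refine iSup₂_le fun u hu => ?_
    rw [← measurable_iff_comap_le]
    have hvu : v u = (fun p : ℝ × ℝ => if p.2 ≤ u then p.1 else 0) ∘ W := by
      funext ω
      rw [hv u ω]
      simp only [Function.comp_apply, hW]
      by_cases h : τ ω ≤ t
      · simp [h]
      · have h1 : ¬ τ ω ≤ u := fun hc => h (hc.trans hu.2)
        have h2 : ¬ t + 1 ≤ u := by
          intro hc; exact absurd (hu.2.trans_lt (by linarith)) (not_lt.mpr hc)
        simp [h, h1, h2]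
    rw [hvu]
    have hf : Measurable (fun p : ℝ × ℝ => if p.2 ≤ u then p.1 else 0) :=
      Measurable.ite (measurable_snd measurableSet_Iic) measurable_fst measurable_const
    exact hf.comp (Measurable.of_comap_le le_rfl)
  -- key: set integrals agree
  have hkey : ∀ A : Set Ω, MeasurableSet[V t] A → ∫ ω in A, v t ω ∂μ = ∫ ω in A, v s ω ∂μ := by
    intro A hAmeas
    have hAint : ∫ ω in A, g ω ∂μ = 0 := by
      obtain ⟨B, hB, hBA⟩ := hVW A hAmeas
      by_cases hmem : ((0:ℝ), t + 1) ∈ B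
      · rw [setIntegral_eq_integral_of_forall_compl_eq_zero, hgint0]
        intro ω hω
        -- ω ∉ A; if t < τ ω then W ω = (0,t+1) ∈ B, so ω ∈ A: contradiction. So τ ω ≤ t.
        have hτt : τ ω ≤ t := by
          by_contra hc
          have : W ω ∈ B := by rw [hW]; simp only [if_neg hc]; exact hmem
          exact hω (by rw [← hBA]; exact this)
        rw [hg]
        have : τ ω ∉ Set.Ioc t s := fun hc => absurd hc.1 (not_lt.mpr hτt)
        simp [Set.indicator_of_notMem this]
      · refine setIntegral_eq_zero_of_forall_eq_zero fun ω hω => ?_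
        have hτt : τ ω ≤ t := by
          by_contra hc
          have : W ω ∈ B := by rw [← hBA] at hω; exact hω
          rw [hW] at this; simp only [if_neg hc] at this
          exact hmem this
        rw [hg]
        have : τ ω ∉ Set.Ioc t s := fun hc => absurd hc.1 (not_lt.mpr hτt)
        simp [Set.indicator_of_notMem this]
    have hsub : ∫ ω in A, (v s ω - v t ω) ∂μ = 0 := by
      rw [show (fun ω => v s ω - v t ω) = g from funext hgdiff] at *
      exact hAint
    have := integral_sub ((hvint s).integrableOn) ((hvint t).integrableOn) (μ := μ.restrict A)
    rw [hsub] at this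
    linarith [this]
  -- conclude via uniqueness of conditional expectation
  haveI : SigmaFinite (μ.trim (hVle t)) := by
    have : IsFiniteMeasure (μ.trim (hVle t)) := isFiniteMeasure_trim (hVle t)
    exact this.toSigmaFinite
  refine (ae_eq_condExp_of_forall_setIntegral_eq (hVle t) (hvint s)
    (fun A _ _ => (hvint t).integrableOn)
    (fun A hAm _ => hkey A hAm)
    ?_).symm
  exact StronglyMeasurable.aestronglyMeasurable
    ((hvVmeas t ht.1).stronglyMeasurable)
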